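/- For every fixed positive integer b there exists n₀ such that for all n ≥ n₀ with b dividing n, there exists a b-burst-deletion-correcting code C ⊆ 𝔽₂ⁿ with |C| ≥ 2ⁿ · b / (2^b · n · (log₂ n)^{b−1}); i.e., its redundancy n − log₂|C| is at most log₂(n) + (b−1)·log₂(log₂ n) + b − log₂(b) bits. -/

import Mathlib

/-- The `b`-burst-deletion ball of `x`: all vectors obtained from `x` by deleting
`b` consecutive coordinates. -/
def delBall (b : ℕ) {n : ℕ} (x : Fin n → Bool) : Set (Fin (n - b) → Bool) :=
  { y | ∃ i ≤ n - b, ∀ j : Fin (n - b),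
      y j = if (j : ℕ) < i
        then x ⟨(j : ℕ), by have := j.isLt; omega⟩
        else x ⟨(j : ℕ) + b, by have := j.isLt; omega⟩ }

/-- The `b`-burst-insertion ball of `x`: all vectors `v` of length `n + b`
such that `x` is obtained from `v` by deleting `b` consecutive coordinates. -/
def insBall (b : ℕ) {n : ℕ} (x : Fin n → Bool) : Set (Fin (n + b) → Bool) :=
  { v | ∃ i ≤ n, ∀ j : Fin n,
      x j = if (j : ℕ) < i
        then v ⟨(j : ℕ), by have := j.isLt; omega⟩
        else v ⟨(j : ℕ) + b, by have := j.isLt; omega⟩ }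

/-- Number of runs (maximal blocks of consecutive equal coordinates) of a binary vector. -/
def numRuns {m : ℕ} (z : Fin m → Bool) : ℕ :=
  (Finset.univ.filter (fun i : Fin m =>
    (i : ℕ) = 0 ∨ z i ≠ z ⟨(i : ℕ) - 1, by have := i.isLt; omega⟩)).card

/-- Every run of `z` has length at most `f`: every window of `f + 1` consecutive
coordinates contains two different values. -/
def maxRunLe {m : ℕ} (f : ℕ) (z : Fin m → Bool) : Prop :=
  ∀ i : ℕ, ∀ hi : i + f < m, ∃ j : ℕ, ∃ hj : j ≤ f,
    z ⟨i + j, by omega⟩ ≠ z ⟨i, by omega⟩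

/-- The Varshamov–Tenengolts code `VT_a(n)`. -/
def VT (n a : ℕ) : Set (Fin n → Bool) :=
  { x | (∑ i : Fin n, ((i : ℕ) + 1) * (x i).toNat) ≡ a [MOD n + 1] }

/-- The shifted Varshamov–Tenengolts code `SVT_{c,d}(n,P)`. -/
def SVT (n P c d : ℕ) : Set (Fin n → Bool) :=
  { x | (∑ i : Fin n, ((i : ℕ) + 1) * (x i).toNat) ≡ c [MOD P] ∧
        (∑ i : Fin n, (x i).toNat) ≡ d [MOD 2] }

/-- The `(2,1)`-burst-correcting code `C_{2,1}(n,a,c)`. -/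
def C21 (n a c : ℕ) : Set (Fin n → Bool) :=
  { x | (∑ i : Fin n, (x i).toNat) ≡ c [MOD 4] ∧
        (∑ i : Fin n, ((i : ℕ) + 1) * (x i).toNat) ≡ a [MOD 2 * n - 1] }

/-- Row `r` (0-indexed) of the `b × (n / b)` array `A_b(x)`: the entry in
column `j` (0-indexed) is `x (j * b + r)`. -/
def arrRow {n : ℕ} (b : ℕ) (x : Fin n → Bool) (r : Fin b) : Fin (n / b) → Bool :=
  fun j => x ⟨(j : ℕ) * b + (r : ℕ), by
    have hj : (j : ℕ) + 1 ≤ n / b := j.isLt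
    have hr := r.isLt
    have h1 : ((j : ℕ) + 1) * b ≤ n / b * b := Nat.mul_le_mul_right b hj
    have h2 : n / b * b ≤ n := Nat.div_mul_le_self n b
    have h3 : ((j : ℕ) + 1) * b = (j : ℕ) * b + b := by ring
    omega⟩

/-- Non-consecutive burst deletion ball: all vectors obtained from `x` by deleting
`a` coordinates whose positions all lie within a window of `b` consecutive positions. -/
def ncDelBall (a b : ℕ) {n : ℕ} (x : Fin n → Bool) : Set (Fin (n - a) → Bool) :=
  { y | ∃ f : Fin (n - a) → Fin n, StrictMono f ∧ (∀ j, y j = x (f j)) ∧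
      ∃ i : ℕ, ∀ p : Fin n, p ∉ Set.range f → i ≤ (p : ℕ) ∧ (p : ℕ) < i + b }

/-- Non-consecutive burst insertion ball: all vectors `v` of length `n + a` from which
`x` is obtained by a non-consecutive deletion burst of `a` deletions within a window
of `b` consecutive positions. -/
def ncInsBall (a b : ℕ) {n : ℕ} (x : Fin n → Bool) : Set (Fin (n + a) → Bool) :=
  { v | ∃ f : Fin n → Fin (n + a), StrictMono f ∧ (∀ j, x j = v (f j)) ∧
      ∃ i : ℕ, ∀ p : Fin (n + a), p ∉ Set.range f → i ≤ (p : ℕ) ∧ (p : ℕ) < i + b }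

/-- The vector obtained from `x` by deleting the coordinate at (0-indexed) position `k`. -/
def delOne {n : ℕ} (x : Fin n → Bool) (k : ℕ) : Fin (n - 1) → Bool :=
  fun j => if (j : ℕ) < k
    then x ⟨(j : ℕ), by have := j.isLt; omega⟩
    else x ⟨(j : ℕ) + 1, by have := j.isLt; omega⟩

/-- The `(2,1)`-burst ball of `x`: all results of deleting two adjacent coordinates
of `x` and inserting one bit at the same position. -/
def d21Ball {n : ℕ} (x : Fin n → Bool) : Set (Fin (n - 1) → Bool) :=
  { y | ∃ i : ℕ, ∃ hi : i + 1 < n, ∃ a : Bool,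
      ∀ j : Fin (n - 1), y j =
        if (j : ℕ) < i then x ⟨(j : ℕ), by have := j.isLt; omega⟩
        else if (j : ℕ) = i then a
        else x ⟨(j : ℕ) + 1, by have := j.isLt; omega⟩ }

namespace BD
open Finset

lemma sum_shift (u : ℕ → ℕ) (k M : ℕ) :
    ∑ j ∈ Finset.Ico k M, u (j+1) = ∑ j ∈ Finset.Ico (k+1) (M+1), u j := by
  rw [Finset.sum_Ico_eq_sum_range, Finset.sum_Ico_eq_sum_range, Nat.succ_sub_succ]
  exact Finset.sum_congr rfl fun i _ => by rw [show k + i + 1 = k + 1 + i by omega]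

lemma sum_del_wt {M k : ℕ} (hk : k < M) (u v : ℕ → ℕ)
    (hv : ∀ j, j < M - 1 → v j = if j < k then u j else u (j+1)) :
    ∑ i ∈ Finset.range M, u i = (∑ j ∈ Finset.range (M-1), v j) + u k := by
  obtain ⟨M', rfl⟩ : ∃ M', M = M' + 1 := ⟨M-1, by omega⟩
  simp only [Nat.add_sub_cancel] at hv ⊢
  have hkM : k ≤ M' := by omega
  have h1 : ∑ j ∈ Finset.range M', v j
      = (∑ j ∈ Finset.Ico 0 k, u j) + ∑ j ∈ Finset.Ico k M', u (j+1) := by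
    rw [Finset.range_eq_Ico, ← Finset.sum_Ico_consecutive _ (Nat.zero_le k) hkM]
    congr 1
    · refine Finset.sum_congr rfl fun j hj => ?_
      simp only [Finset.mem_Ico] at hj
      rw [hv j (by omega), if_pos hj.2]
    · refine Finset.sum_congr rfl fun j hj => ?_
      simp only [Finset.mem_Ico] at hj
      rw [hv j (by omega), if_neg (by omega)]
  have h2 : ∑ i ∈ Finset.range (M'+1), u i
      = (∑ j ∈ Finset.Ico 0 k, u j) + (u k + ∑ j ∈ Finset.Ico (k+1) (M'+1), u j) := by
    rw [Finset.range_eq_Ico, ← Finset.sum_Ico_consecutive _ (Nat.zero_le k) (by omega : k ≤ M'+1),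
      Finset.sum_eq_sum_Ico_succ_bot (by omega : k < M'+1)]
  rw [h1, h2, sum_shift]
  ring

lemma sum_del_ck {M k : ℕ} (hk : k < M) (u v : ℕ → ℕ)
    (hv : ∀ j, j < M - 1 → v j = if j < k then u j else u (j+1)) :
    ∑ i ∈ Finset.range M, (i+1) * u i
      = (∑ j ∈ Finset.range (M-1), (j+1) * v j) + (∑ j ∈ Finset.Ico k (M-1), v j)
        + (k+1) * u k := by
  obtain ⟨M', rfl⟩ : ∃ M', M = M' + 1 := ⟨M-1, by omega⟩
  simp only [Nat.add_sub_cancel] at hv ⊢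
  have hkM : k ≤ M' := by omega
  have h1 : ∑ j ∈ Finset.range M', (j+1) * v j
      = (∑ j ∈ Finset.Ico 0 k, (j+1) * u j) + ∑ j ∈ Finset.Ico k M', (j+1) * u (j+1) := by
    rw [Finset.range_eq_Ico, ← Finset.sum_Ico_consecutive _ (Nat.zero_le k) hkM]
    congr 1
    · refine Finset.sum_congr rfl fun j hj => ?_
      simp only [Finset.mem_Ico] at hj
      rw [hv j (by omega), if_pos hj.2]
    · refine Finset.sum_congr rfl fun j hj => ?_
      simp only [Finset.mem_Ico] at hj
      rw [hv j (by omega), if_neg (by omega)]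
  have h1b : ∑ j ∈ Finset.Ico k M', v j = ∑ j ∈ Finset.Ico k M', u (j+1) := by
    refine Finset.sum_congr rfl fun j hj => ?_
    simp only [Finset.mem_Ico] at hj
    rw [hv j (by omega), if_neg (by omega)]
  have h2 : ∑ i ∈ Finset.range (M'+1), (i+1) * u i
      = (∑ j ∈ Finset.Ico 0 k, (j+1) * u j)
        + ((k+1) * u k + ∑ j ∈ Finset.Ico (k+1) (M'+1), (j+1) * u j) := by
    rw [Finset.range_eq_Ico, ← Finset.sum_Ico_consecutive _ (Nat.zero_le k) (by omega : k ≤ M'+1),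
      Finset.sum_eq_sum_Ico_succ_bot (by omega : k < M'+1)]
  have h3 : (∑ j ∈ Finset.Ico k M', (j+1) * u (j+1)) + (∑ j ∈ Finset.Ico k M', u (j+1))
      = ∑ j ∈ Finset.Ico (k+1) (M'+1), (j+1) * u j := by
    rw [← Finset.sum_add_distrib, ← sum_shift (fun j => (j+1) * u j) k M']
    exact Finset.sum_congr rfl fun j _ => by ring
  rw [h1, h1b, h2]
  omega

def wt {m : ℕ} (x : Fin m → Bool) : ℕ := ∑ i : Fin m, (x i).toNat
def ck {m : ℕ} (x : Fin m → Bool) : ℕ := ∑ i : Fin m, ((i:ℕ)+1) * (x i).toNat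
def natv {m : ℕ} (x : Fin m → Bool) : ℕ → ℕ :=
  fun i => if h : i < m then (x ⟨i,h⟩).toNat else 0

lemma natv_lt {m : ℕ} (x : Fin m → Bool) {i : ℕ} (h : i < m) :
    natv x i = (x ⟨i,h⟩).toNat := dif_pos h

lemma natv_le_one {m : ℕ} (x : Fin m → Bool) (i : ℕ) : natv x i ≤ 1 := by
  unfold natv; split
  · exact Bool.toNat_le _
  · omega

lemma wt_eq {m : ℕ} (x : Fin m → Bool) : wt x = ∑ i ∈ Finset.range m, natv x i := by
  rw [wt, ← Fin.sum_univ_eq_sum_range (natv x) m]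
  exact Finset.sum_congr rfl fun i _ => by rw [natv_lt x i.isLt]

lemma ck_eq {m : ℕ} (x : Fin m → Bool) :
    ck x = ∑ i ∈ Finset.range m, (i+1) * natv x i := by
  rw [ck, ← Fin.sum_univ_eq_sum_range (fun i => (i+1) * natv x i) m]
  exact Finset.sum_congr rfl fun i _ => by rw [natv_lt x i.isLt]

lemma natv_delOne {m k : ℕ} (x : Fin m → Bool) {j : ℕ} (hj : j < m - 1) :
    natv (delOne x k) j = if j < k then natv x j else natv x (j+1) := by
  rw [natv_lt _ hj]
  simp only [delOne]
  split
  · rw [natv_lt x (by omega)]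
  · rw [natv_lt x (by omega)]

lemma wt_delOne {m k : ℕ} (hk : k < m) (x : Fin m → Bool) :
    wt x = wt (delOne x k) + (x ⟨k,hk⟩).toNat := by
  rw [wt_eq, wt_eq, ← natv_lt x hk]
  exact sum_del_wt hk (natv x) (natv (delOne x k)) (fun j hj => natv_delOne x hj)

lemma ck_delOne {m k : ℕ} (hk : k < m) (x : Fin m → Bool) :
    ck x = ck (delOne x k) + (∑ j ∈ Finset.Ico k (m-1), natv (delOne x k) j)
      + (k+1) * (x ⟨k,hk⟩).toNat := by
  rw [ck_eq, ck_eq, ← natv_lt x hk]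
  exact sum_del_ck hk (natv x) (natv (delOne x k)) (fun j hj => natv_delOne x hj)

lemma toNat_inj' {a b : Bool} (h : a.toNat = b.toNat) : a = b := by
  cases a <;> cases b <;> simp_all

lemma window_of_key {m : ℕ} (x y : Fin m → Bool) (k k' : ℕ) (hk : k ≤ k')
    (hkm : k < m) (hk'm : k' < m)
    (hkey : (k+1) * (x ⟨k, hkm⟩).toNat + (∑ j ∈ Finset.Ico k k', natv (delOne x k) j)
      = (k'+1) * (y ⟨k', hk'm⟩).toNat) :
    x ⟨k, hkm⟩ = y ⟨k', hk'm⟩ ∧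
      ∀ j, k ≤ j → j < k' → natv (delOne x k) j = (y ⟨k', hk'm⟩).toNat := by
  set z := delOne x k with hz
  have ha : (∑ j ∈ Finset.Ico k k', natv z j) ≤ k' - k := by
    calc (∑ j ∈ Finset.Ico k k', natv z j) ≤ ∑ j ∈ Finset.Ico k k', 1 :=
          Finset.sum_le_sum (fun j _ => natv_le_one z j)
      _ = k' - k := by rw [Finset.sum_const, Nat.card_Ico, smul_eq_mul, mul_one]
  cases hcc : y ⟨k', hk'm⟩ with
  | false =>
    rw [hcc] at hkey
    simp only [Bool.toNat_false, Nat.mul_zero] at hkey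
    cases hxb : x ⟨k, hkm⟩ with
    | true =>
      rw [hxb] at hkey
      simp only [Bool.toNat_true, Nat.mul_one] at hkey
      omega
    | false =>
      have h2 : (∑ j ∈ Finset.Ico k k', natv z j) = 0 := by omega
      refine ⟨rfl, fun j hj1 hj2 => ?_⟩
      have := (Finset.sum_eq_zero_iff.mp h2) j (Finset.mem_Ico.mpr ⟨hj1, hj2⟩)
      simp [this]
  | true =>
    rw [hcc] at hkey
    simp only [Bool.toNat_true, Nat.mul_one] at hkey
    cases hxb : x ⟨k, hkm⟩ with
    | false =>
      rw [hxb] at hkey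
      simp only [Bool.toNat_false, Nat.mul_zero] at hkey
      omega
    | true =>
      rw [hxb] at hkey
      simp only [Bool.toNat_true, Nat.mul_one] at hkey
      have hA : (∑ j ∈ Finset.Ico k k', natv z j) = k' - k := by omega
      refine ⟨rfl, fun j hj1 hj2 => ?_⟩
      simp only [Bool.toNat_true]
      by_contra hne
      have hj0 : natv z j < 1 := by
        have := natv_le_one z j
        omega
      have hlt : (∑ j ∈ Finset.Ico k k', natv z j) < ∑ j ∈ Finset.Ico k k', 1 :=
        Finset.sum_lt_sum (fun j _ => natv_le_one z j)
          ⟨j, Finset.mem_Ico.mpr ⟨hj1, hj2⟩, hj0⟩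
      rw [Finset.sum_const, Nat.card_Ico, smul_eq_mul, mul_one] at hlt
      omega

lemma recon {m : ℕ} (x y : Fin m → Bool) (k k' : ℕ) (hk : k ≤ k')
    (hkm : k < m) (hk'm : k' < m)
    (h : delOne x k = delOne y k')
    (hxk : x ⟨k, hkm⟩ = y ⟨k', hk'm⟩)
    (hwin : ∀ j, k ≤ j → j < k' → natv (delOne x k) j = (y ⟨k', hk'm⟩).toNat) :
    x = y ∧ ∀ u : Fin m, k ≤ (u:ℕ) → (u:ℕ) ≤ k' → x u = y ⟨k', hk'm⟩ := by
  set c := y ⟨k', hk'm⟩ with hc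
  have hzval : ∀ j : ℕ, ∀ hj : j < m - 1, k ≤ j → j < k' → delOne x k ⟨j, hj⟩ = c := by
    intro j hj h1 h2
    have := hwin j h1 h2
    rw [natv_lt _ hj] at this
    exact toNat_inj' this
  have hxall : ∀ u : ℕ, ∀ hu : u < m, k ≤ u → u ≤ k' → x ⟨u, hu⟩ = c := by
    intro u hu h1 h2
    rcases Nat.eq_or_lt_of_le h1 with he | hlt
    · rw [show (⟨u, hu⟩ : Fin m) = ⟨k, hkm⟩ by exact Fin.ext he.symm]
      exact hxk
    · have hj : u - 1 < m - 1 := by omega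
      have e1 : delOne x k ⟨u-1, hj⟩ = x ⟨u, hu⟩ := by
        simp only [delOne, if_neg (by simp; omega : ¬ ((⟨u-1,hj⟩ : Fin (m-1)) : ℕ) < k)]
        exact congrArg x (Fin.ext (by simp; omega))
      rw [← e1]
      exact hzval (u-1) hj (by omega) (by omega)
  have hyall : ∀ u : ℕ, ∀ hu : u < m, k ≤ u → u ≤ k' → y ⟨u, hu⟩ = c := by
    intro u hu h1 h2
    rcases Nat.eq_or_lt_of_le h2 with he | hlt
    · rw [show (⟨u, hu⟩ : Fin m) = ⟨k', hk'm⟩ by exact Fin.ext he]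
    · have hj : u < m - 1 := by omega
      have e1 : delOne y k' ⟨u, hj⟩ = y ⟨u, hu⟩ := by
        simp only [delOne, if_pos (by simp; omega : ((⟨u,hj⟩ : Fin (m-1)) : ℕ) < k')]
      rw [← e1, ← h]
      exact hzval u hj h1 hlt
  constructor
  · funext u
    obtain ⟨u, hu⟩ := u
    rcases Nat.lt_or_ge u k with h1 | h1
    · have hj : u < m - 1 := by omega
      have e1 : delOne x k ⟨u, hj⟩ = x ⟨u, hu⟩ := by
        simp only [delOne, if_pos (by simp; omega : ((⟨u,hj⟩ : Fin (m-1)) : ℕ) < k)]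
      have e2 : delOne y k' ⟨u, hj⟩ = y ⟨u, hu⟩ := by
        simp only [delOne, if_pos (by simp; omega : ((⟨u,hj⟩ : Fin (m-1)) : ℕ) < k')]
      rw [← e1, h, e2]
    · rcases le_or_gt u k' with h2 | h2
      · rw [hxall u hu h1 h2, hyall u hu h1 h2]
      · have hj : u - 1 < m - 1 := by omega
        have e1 : delOne x k ⟨u-1, hj⟩ = x ⟨u, hu⟩ := by
          simp only [delOne, if_neg (by simp; omega : ¬ ((⟨u-1,hj⟩ : Fin (m-1)) : ℕ) < k)]
          exact congrArg x (Fin.ext (by simp; omega))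
        have e2 : delOne y k' ⟨u-1, hj⟩ = y ⟨u, hu⟩ := by
          simp only [delOne, if_neg (by simp; omega : ¬ ((⟨u-1,hj⟩ : Fin (m-1)) : ℕ) < k')]
          exact congrArg y (Fin.ext (by simp; omega))
        rw [← e1, h, e2]
  · intro u h1 h2
    obtain ⟨u, hu⟩ := u
    exact hxall u hu h1 h2

lemma key_eq_vt {m : ℕ} (x y : Fin m → Bool) (k k' : ℕ) (hk : k ≤ k')
    (hkm : k < m) (hk'm : k' ≤ m - 1)
    (h : delOne x k = delOne y k')
    (hmod : ck x ≡ ck y [MOD m + 1]) :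
    (k+1) * (x ⟨k, hkm⟩).toNat + (∑ j ∈ Finset.Ico k k', natv (delOne x k) j)
      = (k'+1) * (y ⟨k', by omega⟩).toNat := by
  have hk'lt : k' < m := by omega
  set z := delOne x k with hz
  have e1 : ck x = ck z + (∑ j ∈ Finset.Ico k (m-1), natv z j)
      + (k+1) * (x ⟨k, hkm⟩).toNat := ck_delOne hkm x
  have e2 : ck y = ck (delOne y k') + (∑ j ∈ Finset.Ico k' (m-1), natv (delOne y k') j)
      + (k'+1) * (y ⟨k', by omega⟩).toNat := ck_delOne hk'lt y
  rw [← h] at e2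
  have hsplit : (∑ j ∈ Finset.Ico k (m-1), natv z j)
      = (∑ j ∈ Finset.Ico k k', natv z j) + (∑ j ∈ Finset.Ico k' (m-1), natv z j) :=
    (Finset.sum_Ico_consecutive _ hk (by omega)).symm
  set A := ∑ j ∈ Finset.Ico k k', natv z j with hA
  set T := ∑ j ∈ Finset.Ico k' (m-1), natv z j with hT
  set X := (x ⟨k, hkm⟩).toNat with hX
  set Y := (y ⟨k', by omega⟩).toNat with hY
  have hmod2 : (ck z + T) + (A + (k+1) * X) ≡ (ck z + T) + ((k'+1) * Y) [MOD m+1] := by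
    have l1 : (ck z + T) + (A + (k+1) * X) = ck x := by omega
    have l2 : (ck z + T) + ((k'+1) * Y) = ck y := by omega
    rw [l1, l2]; exact hmod
  have hmod3 : A + (k+1) * X ≡ (k'+1) * Y [MOD m+1] :=
    Nat.ModEq.add_left_cancel' _ hmod2
  have hAle : A ≤ k' - k := by
    calc A ≤ ∑ j ∈ Finset.Ico k k', 1 := Finset.sum_le_sum (fun j _ => natv_le_one z j)
      _ = k' - k := by rw [Finset.sum_const, Nat.card_Ico, smul_eq_mul, mul_one]
  have hXle : X ≤ 1 := Bool.toNat_le _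
  have hYle : Y ≤ 1 := Bool.toNat_le _
  have hL : A + (k+1) * X < m + 1 := by
    have : (k+1) * X ≤ k + 1 := by
      calc (k+1) * X ≤ (k+1) * 1 := Nat.mul_le_mul_left _ hXle
        _ = k + 1 := Nat.mul_one _
    omega
  have hR : (k'+1) * Y < m + 1 := by
    have : (k'+1) * Y ≤ k' + 1 := by
      calc (k'+1) * Y ≤ (k'+1) * 1 := Nat.mul_le_mul_left _ hYle
        _ = k' + 1 := Nat.mul_one _
    omega
  have := hmod3
  unfold Nat.ModEq at this
  rw [Nat.mod_eq_of_lt hL, Nat.mod_eq_of_lt hR] at this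
  omega

lemma key_eq_svt {m P : ℕ} (x y : Fin m → Bool) (k k' : ℕ) (hk : k ≤ k')
    (hkm : k < m) (hk'm : k' < m) (hwin : k' - k < P)
    (h : delOne x k = delOne y k')
    (hmod : ck x ≡ ck y [MOD P]) (hpar : wt x ≡ wt y [MOD 2]) :
    (k+1) * (x ⟨k, hkm⟩).toNat + (∑ j ∈ Finset.Ico k k', natv (delOne x k) j)
      = (k'+1) * (y ⟨k', hk'm⟩).toNat := by
  set z := delOne x k with hz
  set X := (x ⟨k, hkm⟩).toNat with hX
  set Y := (y ⟨k', hk'm⟩).toNat with hY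
  have hXle : X ≤ 1 := Bool.toNat_le _
  have hYle : Y ≤ 1 := Bool.toNat_le _
  -- parity gives X = Y
  have w1 : wt x = wt z + X := wt_delOne hkm x
  have w2 : wt y = wt z + Y := by
    have := wt_delOne hk'm y
    rw [← h] at this
    exact this
  have hXY : X = Y := by
    have hp : wt z + X ≡ wt z + Y [MOD 2] := by rw [← w1, ← w2]; exact hpar
    have := Nat.ModEq.add_left_cancel' _ hp
    unfold Nat.ModEq at this
    rw [Nat.mod_eq_of_lt (by omega : X < 2), Nat.mod_eq_of_lt (by omega : Y < 2)] at this
    exact this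
  have e1 : ck x = ck z + (∑ j ∈ Finset.Ico k (m-1), natv z j) + (k+1) * X := ck_delOne hkm x
  have e2 : ck y = ck (delOne y k') + (∑ j ∈ Finset.Ico k' (m-1), natv (delOne y k') j)
      + (k'+1) * Y := ck_delOne hk'm y
  rw [← h] at e2
  have hsplit : (∑ j ∈ Finset.Ico k (m-1), natv z j)
      = (∑ j ∈ Finset.Ico k k', natv z j) + (∑ j ∈ Finset.Ico k' (m-1), natv z j) :=
    (Finset.sum_Ico_consecutive _ hk (by omega)).symm
  set A := ∑ j ∈ Finset.Ico k k', natv z j with hA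
  set T := ∑ j ∈ Finset.Ico k' (m-1), natv z j with hT
  have hAle : A ≤ k' - k := by
    calc A ≤ ∑ j ∈ Finset.Ico k k', 1 := Finset.sum_le_sum (fun j _ => natv_le_one z j)
      _ = k' - k := by rw [Finset.sum_const, Nat.card_Ico, smul_eq_mul, mul_one]
  have hmod2 : (ck z + T) + (A + (k+1) * X) ≡ (ck z + T) + ((k'+1) * Y) [MOD P] := by
    have l1 : (ck z + T) + (A + (k+1) * X) = ck x := by omega
    have l2 : (ck z + T) + ((k'+1) * Y) = ck y := by omega
    rw [l1, l2]; exact hmod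
  have hmod3 : A + (k+1) * X ≡ (k'+1) * Y [MOD P] :=
    Nat.ModEq.add_left_cancel' _ hmod2
  rcases Nat.eq_zero_or_pos Y with hY0 | hY1
  · -- X = Y = 0, need A = 0
    rw [hXY, hY0] at hmod3 ⊢
    simp only [Nat.mul_zero, Nat.add_zero, Nat.zero_add] at hmod3 ⊢
    have hdvd : P ∣ A := (Nat.modEq_zero_iff_dvd).mp hmod3
    have : A = 0 := Nat.eq_zero_of_dvd_of_lt hdvd (by omega)
    omega
  · have hY1' : Y = 1 := by omega
    have hX1 : X = 1 := by omega
    rw [hX1, hY1'] at hmod3 ⊢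
    simp only [Nat.mul_one] at hmod3 ⊢
    have hle : A + (k+1) ≤ k' + 1 := by omega
    have hdvd : P ∣ (k'+1) - (A + (k+1)) := (Nat.modEq_iff_dvd' hle).mp hmod3
    have : (k'+1) - (A + (k+1)) = 0 := Nat.eq_zero_of_dvd_of_lt hdvd (by omega)
    omega

def RLL {m : ℕ} (f : ℕ) (w : Fin m → Bool) : Prop :=
  ∀ k k' : ℕ, k ≤ k' → k' < m →
    (∀ u u' : Fin m, k ≤ (u:ℕ) → (u:ℕ) ≤ k' → k ≤ (u':ℕ) → (u':ℕ) ≤ k' → w u = w u') →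
    k' - k ≤ f

lemma vt_correct {m f : ℕ} (x y : Fin m → Bool) (k k' : ℕ)
    (hkm : k < m) (hk'm : k' < m)
    (h : delOne x k = delOne y k') (hmod : ck x ≡ ck y [MOD m + 1])
    (hrll : RLL f x) :
    x = y ∧ k' ≤ k + f ∧ k ≤ k' + f := by
  rcases le_total k k' with hk | hk
  · have key := key_eq_vt x y k k' hk hkm (by omega) h hmod
    obtain ⟨hxk, hwin⟩ := window_of_key x y k k' hk hkm hk'm key
    obtain ⟨hxy, hconst⟩ := recon x y k k' hk hkm hk'm h hxk hwin
    refine ⟨hxy, ?_, by omega⟩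
    have hb : k' - k ≤ f := by
      refine hrll k k' hk hk'm (fun u u' h1 h2 h3 h4 => ?_)
      rw [hconst u h1 h2, hconst u' h3 h4]
    omega
  · have key := key_eq_vt y x k' k hk hk'm (by omega) h.symm hmod.symm
    obtain ⟨hyk, hwin⟩ := window_of_key y x k' k hk hk'm hkm key
    obtain ⟨hyx, hconst⟩ := recon y x k' k hk hk'm hkm h.symm hyk hwin
    refine ⟨hyx.symm, by omega, ?_⟩
    have hb : k - k' ≤ f := by
      refine hrll k' k hk hkm (fun u u' h1 h2 h3 h4 => ?_)
      rw [hyx] at hconst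
      rw [hconst u h1 h2, hconst u' h3 h4]
    omega

lemma svt_correct {m P : ℕ} (x y : Fin m → Bool) (k k' : ℕ)
    (hkm : k < m) (hk'm : k' < m) (hw1 : k' - k < P) (hw2 : k - k' < P)
    (h : delOne x k = delOne y k')
    (hmod : ck x ≡ ck y [MOD P]) (hpar : wt x ≡ wt y [MOD 2]) :
    x = y := by
  rcases le_total k k' with hk | hk
  · have key := key_eq_svt x y k k' hk hkm hk'm hw1 h hmod hpar
    obtain ⟨hxk, hwin⟩ := window_of_key x y k k' hk hkm hk'm key
    exact (recon x y k k' hk hkm hk'm h hxk hwin).1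
  · have key := key_eq_svt y x k' k hk hk'm hkm hw2 h.symm hmod.symm hpar.symm
    obtain ⟨hyk, hwin⟩ := window_of_key y x k' k hk hk'm hkm key
    exact ((recon y x k' k hk hk'm hkm h.symm hyk hwin).1).symm

lemma idx_lt {b n m t s : ℕ} (hn : n = m * b) (ht : t < m) (hs : s < b) :
    t * b + s < n := by
  have h1 : (t + 1) * b ≤ m * b := Nat.mul_le_mul_right b ht
  have h2 : (t + 1) * b = t * b + b := Nat.succ_mul t b
  omega

def row (b n m : ℕ) (hn : n = m * b) (x : Fin n → Bool) (s : ℕ) (hs : s < b) :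
    Fin m → Bool :=
  fun t => x ⟨(t : ℕ) * b + s, idx_lt hn t.isLt hs⟩

def zrow (b n m : ℕ) (hn : n = m * b) (z : Fin (n - b) → Bool) (s : ℕ) (hs : s < b) :
    Fin (m - 1) → Bool :=
  fun t => z ⟨(t : ℕ) * b + s, by
    have h1 := idx_lt (rfl : (m-1)*b = (m-1)*b) t.isLt hs
    have h2 : (m - 1) * b = m * b - b := by rw [Nat.sub_mul, one_mul]
    omega⟩

lemma rows_of_mem {b n m : ℕ} (hb : 0 < b) (hm : 1 ≤ m) (hn : n = m * b)
    (x : Fin n → Bool) (z : Fin (n - b) → Bool) (hz : z ∈ delBall b x) :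
    ∃ q r : ℕ, r < b ∧ q + 1 ≤ m ∧ (0 < r → q + 2 ≤ m) ∧
      ∀ s : ℕ, ∀ hs : s < b,
        delOne (row b n m hn x s hs) (q + if s < r then 1 else 0)
          = zrow b n m hn z s hs := by
  obtain ⟨i, hi, hf⟩ := hz
  have hmb : (m - 1) * b = m * b - b := by rw [Nat.sub_mul, one_mul]
  set q := i / b with hq
  set r := i % b with hrr
  have hdm : b * q + r = i := Nat.div_add_mod i b
  have hqb : q * b = b * q := mul_comm q b
  have hrb : r < b := Nat.mod_lt _ hb
  have hq1 : q + 1 ≤ m := by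
    have h2 : q * b ≤ (m - 1) * b := by omega
    have := Nat.le_of_mul_le_mul_right h2 hb
    omega
  have hq2 : 0 < r → q + 2 ≤ m := by
    intro hr
    by_contra hc
    have h2 : (m - 1) * b ≤ q * b := Nat.mul_le_mul_right b (by omega)
    omega
  refine ⟨q, r, hrb, hq1, hq2, ?_⟩
  intro s hs
  funext t
  obtain ⟨t, ht⟩ := t
  have hidx : t * b + s < n - b := by
    have h1 := idx_lt (rfl : (m-1)*b = (m-1)*b) ht hs
    omega
  have hrhs : zrow b n m hn z s hs ⟨t, ht⟩ = z ⟨t * b + s, hidx⟩ := rfl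
  have htb : t * b ≤ q * b ∨ True := Or.inr trivial
  have hiff : (t < q + if s < r then 1 else 0) ↔ (t * b + s < i) := by
    by_cases hsr : s < r
    · simp only [if_pos hsr]
      constructor
      · intro hlt
        have h2 : t * b ≤ q * b := Nat.mul_le_mul_right b (by omega)
        omega
      · intro hlt
        by_contra hc
        have h2 : (q + 1) * b ≤ t * b := Nat.mul_le_mul_right b (by omega)
        have h3 : (q + 1) * b = q * b + b := Nat.succ_mul q b
        omega
    · simp only [if_neg hsr]
      constructor
      · intro hlt
        have h2 : (t + 1) * b ≤ q * b := Nat.mul_le_mul_right b (by omega)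
        have h3 : (t + 1) * b = t * b + b := Nat.succ_mul t b
        omega
      · intro hlt
        by_contra hc
        have h2 : q * b ≤ t * b := Nat.mul_le_mul_right b (by omega)
        omega
  rw [hrhs, hf ⟨t * b + s, hidx⟩]
  simp only [delOne, row]
  by_cases hcase : t * b + s < i
  · rw [if_pos (hiff.mpr hcase), if_pos hcase]
  · rw [if_neg (fun hh => hcase (hiff.mp hh)), if_neg hcase]
    refine congrArg x (Fin.ext ?_)
    have h3 : (t + 1) * b = t * b + b := Nat.succ_mul t b
    simp only
    omega
lemma code_correct {b n m f P : ℕ} (hb : 0 < b) (hm : 1 ≤ m) (hn : n = m * b)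
    (hP : f + 3 ≤ P)
    (x y : Fin n → Bool)
    (hrx : RLL f (row b n m hn x 0 hb))
    (hvt : ck (row b n m hn x 0 hb) ≡ ck (row b n m hn y 0 hb) [MOD m + 1])
    (hsvt : ∀ s : ℕ, ∀ hs : s < b, 0 < s →
        ck (row b n m hn x s hs) ≡ ck (row b n m hn y s hs) [MOD P] ∧
        wt (row b n m hn x s hs) ≡ wt (row b n m hn y s hs) [MOD 2])
    (hne : (delBall b x ∩ delBall b y).Nonempty) : x = y := by
  obtain ⟨z, hzx, hzy⟩ := hne
  obtain ⟨q, r, hr, hq1, hq2, hrows⟩ := rows_of_mem hb hm hn x z hzx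
  obtain ⟨q', r', hr', hq1', hq2', hrows'⟩ := rows_of_mem hb hm hn y z hzy
  have hKle : ∀ s : ℕ, (q + if s < r then 1 else 0) < m := by
    intro s; by_cases hc : s < r
    · simp only [if_pos hc]; exact Nat.lt_of_lt_of_le (by omega) (hq2 (by omega))
    · simp only [if_neg hc]; omega
  have hKle' : ∀ s : ℕ, (q' + if s < r' then 1 else 0) < m := by
    intro s; by_cases hc : s < r'
    · simp only [if_pos hc]; exact Nat.lt_of_lt_of_le (by omega) (hq2' (by omega))
    · simp only [if_neg hc]; omega
  have hrow : ∀ s : ℕ, ∀ hs : s < b,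
      delOne (row b n m hn x s hs) (q + if s < r then 1 else 0)
        = delOne (row b n m hn y s hs) (q' + if s < r' then 1 else 0) := by
    intro s hs; rw [hrows s hs, hrows' s hs]
  -- row 0
  obtain ⟨h0, hw1, hw2⟩ := vt_correct (row b n m hn x 0 hb) (row b n m hn y 0 hb)
    _ _ (hKle 0) (hKle' 0) (hrow 0 hb) hvt hrx
  -- other rows
  have hrowseq : ∀ s : ℕ, ∀ hs : s < b, row b n m hn x s hs = row b n m hn y s hs := by
    intro s hs
    rcases Nat.eq_zero_or_pos s with h | hpos
    · subst h; exact h0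
    · set K := q + if s < r then 1 else 0 with hK
      set K' := q' + if s < r' then 1 else 0 with hK'
      set K0 := q + if 0 < r then 1 else 0 with hK0
      set K0' := q' + if 0 < r' then 1 else 0 with hK0'
      have o1 : (if s < r then 1 else 0) ≤ 1 := by split <;> omega
      have o2 : (if 0 < r then 1 else 0) ≤ 1 := by split <;> omega
      have o3 : (if s < r' then 1 else 0) ≤ 1 := by split <;> omega
      have o4 : (if 0 < r' then 1 else 0) ≤ 1 := by split <;> omega
      obtain ⟨hcP, hcp⟩ := hsvt s hs hpos
      exact svt_correct (row b n m hn x s hs) (row b n m hn y s hs) K K'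
        (hKle s) (hKle' s) (by omega) (by omega) (hrow s hs) hcP hcp
  funext u
  obtain ⟨u, hu⟩ := u
  have hsb : u % b < b := Nat.mod_lt _ hb
  have htm : u / b < m := by
    by_contra hc
    have h2 : m * b ≤ (u/b) * b := Nat.mul_le_mul_right b (by omega)
    have h3 : b * (u/b) + u % b = u := Nat.div_add_mod u b
    have h4 : (u/b) * b = b * (u/b) := mul_comm _ _
    omega
  have he : (⟨u, hu⟩ : Fin n) = ⟨(u/b) * b + u % b, idx_lt hn htm hsb⟩ := by
    refine Fin.ext ?_
    have h3 : b * (u/b) + u % b = u := Nat.div_add_mod u b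
    have h4 : (u/b) * b = b * (u/b) := mul_comm _ _
    simp only
    omega
  rw [he]
  have := congrFun (hrowseq (u % b) hsb) ⟨u/b, htm⟩
  exact this
open scoped Classical

noncomputable def Bset (b n f i : ℕ) : Finset (Fin n → Bool) :=
  Finset.univ.filter (fun x => ∀ j : ℕ, j ≤ f → ∀ (h1 : (i+j)*b < n) (h2 : i*b < n),
    x ⟨(i+j)*b, h1⟩ = x ⟨i*b, h2⟩)

lemma min_lt_of_pos {f : ℕ} (hf : 0 < f) (a : ℕ) : min a (f-1) < f := by omega

def emb (b n f i : ℕ) (hf : 0 < f) (p : (Fin n → Bool) × (Fin f → Bool)) : Fin n → Bool :=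
  fun u => if ((u:ℕ) % b = 0 ∧ i+1 ≤ (u:ℕ)/b ∧ (u:ℕ)/b ≤ i+f)
    then p.2 ⟨min ((u:ℕ)/b - (i+1)) (f-1), min_lt_of_pos hf _⟩
    else p.1 u

lemma Bset_card {b n m f : ℕ} (hb : 0 < b) (hf : 0 < f) (hn : n = m * b)
    (i : ℕ) (hif : i + f < m) :
    (Bset b n f i).card * 2^f ≤ 2^n := by
  have hidx : ∀ t : ℕ, t < m → t * b < n := by
    intro t ht
    have := idx_lt (s := 0) hn ht hb
    omega
  have key : ((Bset b n f i) ×ˢ (Finset.univ : Finset (Fin f → Bool))).card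
      ≤ (Finset.univ : Finset (Fin n → Bool)).card := by
    apply Finset.card_le_card_of_injOn (emb b n f i hf)
    · intro p _; exact Finset.mem_univ _
    · intro p hp p' hp' heq
      simp only [Finset.coe_product, Set.mem_prod, Finset.mem_coe] at hp hp'
      have hpB : p.1 ∈ Bset b n f i := hp.1
      have hp'B : p'.1 ∈ Bset b n f i := hp'.1
      simp only [Bset, Finset.mem_filter] at hpB hp'B
      -- recover second component
      have hc : p.2 = p'.2 := by
        funext j
        have hjlt : (i+1+(j:ℕ)) * b < n := hidx _ (by have := j.isLt; omega)
        have e := congrFun heq ⟨(i+1+(j:ℕ))*b, hjlt⟩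
        have hcond : ((((⟨(i+1+(j:ℕ))*b, hjlt⟩ : Fin n)):ℕ) % b = 0 ∧
            i+1 ≤ (((⟨(i+1+(j:ℕ))*b, hjlt⟩ : Fin n)):ℕ)/b ∧
            (((⟨(i+1+(j:ℕ))*b, hjlt⟩ : Fin n)):ℕ)/b ≤ i+f) := by
          refine ⟨Nat.mul_mod_left _ _, ?_, ?_⟩ <;>
            · rw [show ((⟨(i+1+(j:ℕ))*b, hjlt⟩ : Fin n) : ℕ) = (i+1+(j:ℕ))*b from rfl,
                Nat.mul_div_cancel _ hb]
              have := j.isLt; omega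
        simp only [emb, if_pos hcond] at e
        have hval : ((⟨(i+1+(j:ℕ))*b, hjlt⟩ : Fin n) : ℕ) / b = i+1+(j:ℕ) := by
          rw [show ((⟨(i+1+(j:ℕ))*b, hjlt⟩ : Fin n) : ℕ) = (i+1+(j:ℕ))*b from rfl,
            Nat.mul_div_cancel _ hb]
        have hI : (⟨min (((⟨(i+1+(j:ℕ))*b, hjlt⟩ : Fin n) : ℕ)/b - (i+1)) (f-1),
            min_lt_of_pos hf _⟩ : Fin f) = j := by
          refine Fin.ext ?_
          show min (((⟨(i+1+(j:ℕ))*b, hjlt⟩ : Fin n) : ℕ)/b - (i+1)) (f-1) = (j:ℕ)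
          rw [hval]
          have := j.isLt; omega
        rw [hI] at e
        exact e
      -- recover first component
      have hx : p.1 = p'.1 := by
        funext u
        by_cases hcond : ((u:ℕ) % b = 0 ∧ i+1 ≤ (u:ℕ)/b ∧ (u:ℕ)/b ≤ i+f)
        · -- u is one of the overwritten positions
          obtain ⟨hu0, hu1, hu2⟩ := hcond
          have hudvd : (u:ℕ) = ((u:ℕ)/b) * b := by
            have := Nat.div_add_mod (u:ℕ) b
            have h4 : ((u:ℕ)/b) * b = b * ((u:ℕ)/b) := mul_comm _ _
            omega
          have htm : (u:ℕ)/b < m := by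
            by_contra hcc
            have h2 : m * b ≤ ((u:ℕ)/b) * b := Nat.mul_le_mul_right b (by omega)
            have := u.isLt
            omega
          have hib : i * b < n := hidx i (by omega)
          -- p.1 u = p.1 (i*b)
          have step1 : ∀ (w : Fin n → Bool), w ∈ Bset b n f i → w u = w ⟨i*b, hib⟩ := by
            intro w hw
            simp only [Bset, Finset.mem_filter] at hw
            have hequ : i + ((u:ℕ)/b - i) = (u:ℕ)/b := by omega
            have hj := hw.2 ((u:ℕ)/b - i) (by omega)
              (by rw [hequ]; exact hidx _ htm) hib
            simp only [hequ] at hj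
            rw [show (⟨((u:ℕ)/b)*b, by rw [hequ] at *; exact hidx _ htm⟩ : Fin n) = u from
              Fin.ext (by simp only; omega)] at hj
            exact hj
          -- p.1 (i*b) = p'.1 (i*b) via heq at i*b (not overwritten)
          have hnotc : ¬ (((⟨i*b, hib⟩ : Fin n) : ℕ) % b = 0 ∧
              i+1 ≤ (((⟨i*b, hib⟩ : Fin n)):ℕ)/b ∧ (((⟨i*b, hib⟩ : Fin n)):ℕ)/b ≤ i+f) := by
            rw [show ((⟨i*b, hib⟩ : Fin n) : ℕ) = i*b from rfl]
            rw [Nat.mul_div_cancel _ hb]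
            omega
          have e := congrFun heq ⟨i*b, hib⟩
          simp only [emb, if_neg hnotc] at e
          rw [step1 p.1 hp.1, step1 p'.1 hp'.1, e]
        · have e := congrFun heq u
          simp only [emb, if_neg hcond] at e
          exact e
      exact Prod.ext hx hc
  rw [Finset.card_product, Finset.card_univ, Finset.card_univ, Fintype.card_fun,
    Fintype.card_fun] at key
  simpa [Fintype.card_fin] using key
lemma Sgood_card {b n m f : ℕ} (hb : 0 < b) (hf : 0 < f) (hfn : f ≤ n)
    (hn : n = m * b) (hm : 1 ≤ m) :
    2^n ≤ (Finset.univ.filter (fun x : Fin n → Bool => RLL f (row b n m hn x 0 hb))).card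
      + m * 2^(n-f) := by
  have hcardu : (Finset.univ : Finset (Fin n → Bool)).card = 2^n := by
    rw [Finset.card_univ, Fintype.card_fun, Fintype.card_fin, Fintype.card_bool]
  have hsplit := Finset.card_filter_add_card_filter_not
    (s := (Finset.univ : Finset (Fin n → Bool)))
    (p := fun x => RLL f (row b n m hn x 0 hb))
  have hsub : (Finset.univ.filter (fun x : Fin n → Bool => ¬ RLL f (row b n m hn x 0 hb)))
      ⊆ ((Finset.range m).filter (fun i => i + f < m)).biUnion (fun i => Bset b n f i) := by
    intro x hx
    simp only [Finset.mem_filter, Finset.mem_univ, true_and] at hx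
    rw [RLL] at hx
    push_neg at hx
    obtain ⟨k, k', hkk, hk'm, hconst, hlt⟩ := hx
    rw [Finset.mem_biUnion]
    refine ⟨k, by simp only [Finset.mem_filter, Finset.mem_range]; omega, ?_⟩
    simp only [Bset, Finset.mem_filter, Finset.mem_univ, true_and]
    intro j hj h1 h2
    have hu : k + j < m := by omega
    have e1 : x ⟨(k+j)*b, h1⟩ = row b n m hn x 0 hb ⟨k+j, hu⟩ :=
      congrArg x (Fin.ext (by simp only [row]; omega))
    have e2 : x ⟨k*b, h2⟩ = row b n m hn x 0 hb ⟨k, by omega⟩ :=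
      congrArg x (Fin.ext (by simp only [row]; omega))
    rw [e1, e2]
    exact hconst ⟨k+j, hu⟩ ⟨k, by omega⟩ (by simp) (by simp; omega) (by simp) (by simp; omega)
  have hbadle : (Finset.univ.filter
      (fun x : Fin n → Bool => ¬ RLL f (row b n m hn x 0 hb))).card ≤ m * 2^(n-f) := by
    calc (Finset.univ.filter (fun x : Fin n → Bool => ¬ RLL f (row b n m hn x 0 hb))).card
        ≤ (((Finset.range m).filter (fun i => i + f < m)).biUnion (fun i => Bset b n f i)).card :=
          Finset.card_le_card hsub
      _ ≤ ∑ i ∈ (Finset.range m).filter (fun i => i + f < m), (Bset b n f i).card :=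
          Finset.card_biUnion_le
      _ ≤ ((Finset.range m).filter (fun i => i + f < m)).card * 2^(n-f) := by
          refine Finset.sum_le_card_nsmul _ _ _ (fun i hi => ?_)
          simp only [Finset.mem_filter, Finset.mem_range] at hi
          have hB := Bset_card hb hf hn i hi.2
          have hpow : 2^(n-f) * 2^f = 2^n := by
            rw [← pow_add]; congr 1; omega
          have hm2 : (Bset b n f i).card * 2^f ≤ 2^(n-f) * 2^f := by omega
          exact Nat.le_of_mul_le_mul_right hm2 (Nat.two_pow_pos f)
      _ ≤ m * 2^(n-f) := by
          apply Nat.mul_le_mul_right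
          calc ((Finset.range m).filter (fun i => i + f < m)).card
              ≤ (Finset.range m).card := Finset.card_filter_le _ _
            _ = m := Finset.card_range m
  omega
lemma row_congr {b n m : ℕ} (hn : n = m * b) (x : Fin n → Bool) {s1 s2 : ℕ}
    (h1 : s1 < b) (h2 : s2 < b) (h : s1 = s2) :
    row b n m hn x s1 h1 = row b n m hn x s2 h2 := by subst h; rfl

lemma exists_big_fiber {b n m f P : ℕ} (hb : 0 < b) (hm : 1 ≤ m) (hn : n = m * b)
    (hP : P = f + 3) :
    ∃ C : Finset (Fin n → Bool),
      (∀ x ∈ C, RLL f (row b n m hn x 0 hb)) ∧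
      (∀ x ∈ C, ∀ y ∈ C,
        (ck (row b n m hn x 0 hb) ≡ ck (row b n m hn y 0 hb) [MOD m+1]) ∧
        (∀ s : ℕ, ∀ hs : s < b, 0 < s →
          (ck (row b n m hn x s hs) ≡ ck (row b n m hn y s hs) [MOD P]) ∧
          (wt (row b n m hn x s hs) ≡ wt (row b n m hn y s hs) [MOD 2]))) ∧
      (Finset.univ.filter (fun x : Fin n → Bool => RLL f (row b n m hn x 0 hb))).card
        ≤ ((m+1) * (P*2)^(b-1)) * C.card := by
  have hPpos : 0 < P := by omega
  set T := (Fin (m+1)) × (Fin (b-1) → Fin P × Fin 2) with hT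
  haveI : Nonempty T := ⟨(⟨0, by omega⟩, fun _ => (⟨0, hPpos⟩, ⟨0, by omega⟩))⟩
  set σ : (Fin n → Bool) → T := fun x =>
    (⟨ck (row b n m hn x 0 hb) % (m+1), Nat.mod_lt _ (by omega)⟩,
     fun s => (⟨ck (row b n m hn x ((s:ℕ)+1) (by have := s.isLt; omega)) % P,
                 Nat.mod_lt _ hPpos⟩,
               ⟨wt (row b n m hn x ((s:ℕ)+1) (by have := s.isLt; omega)) % 2,
                 Nat.mod_lt _ (by omega)⟩)) with hσ
  set Sg : Finset (Fin n → Bool) :=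
    Finset.univ.filter (fun x : Fin n → Bool => RLL f (row b n m hn x 0 hb)) with hSg
  set F : T → Finset (Fin n → Bool) := fun t => Sg.filter (fun x => σ x = t) with hF
  have hsum : Sg.card = ∑ t : T, (F t).card :=
    Finset.card_eq_sum_card_fiberwise (fun x _ => Finset.mem_univ (σ x))
  obtain ⟨tmax, _, htmax⟩ := Finset.exists_max_image Finset.univ (fun t => (F t).card)
    Finset.univ_nonempty
  refine ⟨F tmax, ?_, ?_, ?_⟩
  · intro x hx
    simp only [hF, hSg, Finset.mem_filter, Finset.mem_univ, true_and] at hx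
    exact hx.1
  · intro x hx y hy
    simp only [hF, Finset.mem_filter] at hx hy
    have hσeq : σ x = σ y := hx.2.trans hy.2.symm
    constructor
    · have h1 : ck (row b n m hn x 0 hb) % (m+1) = ck (row b n m hn y 0 hb) % (m+1) :=
        congrArg (fun t : T => ((t.1 : Fin (m+1)) : ℕ)) hσeq
      exact h1
    · intro s hs hpos
      have hs' : s - 1 < b - 1 := by omega
      set s' : Fin (b-1) := ⟨s-1, hs'⟩ with hs'def
      have hss : (s' : ℕ) + 1 = s := by simp [hs'def]; omega
      have h1 : ck (row b n m hn x ((s':ℕ)+1) (by have := s'.isLt; omega)) % P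
          = ck (row b n m hn y ((s':ℕ)+1) (by have := s'.isLt; omega)) % P :=
        congrArg (fun t : T => (((t.2 s').1 : Fin P) : ℕ)) hσeq
      have h2 : wt (row b n m hn x ((s':ℕ)+1) (by have := s'.isLt; omega)) % 2
          = wt (row b n m hn y ((s':ℕ)+1) (by have := s'.isLt; omega)) % 2 :=
        congrArg (fun t : T => (((t.2 s').2 : Fin 2) : ℕ)) hσeq
      rw [row_congr hn x _ hs hss, row_congr hn y _ hs hss] at h1 h2
      exact ⟨h1, h2⟩
  · rw [hsum]
    have hTcard : Fintype.card T = (m+1) * ((P*2)^(b-1)) := by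
      show Fintype.card (Fin (m + 1) × (Fin (b - 1) → Fin P × Fin 2)) = _
      rw [Fintype.card_prod, Fintype.card_fun]
      simp [Fintype.card_fin]
    calc ∑ t : T, (F t).card ≤ ∑ _t : T, (F tmax).card :=
          Finset.sum_le_sum (fun t _ => htmax t (Finset.mem_univ t))
      _ = Fintype.card T * (F tmax).card := by
          rw [Finset.sum_const, Finset.card_univ, smul_eq_mul]
      _ = ((m+1) * (P*2)^(b-1)) * (F tmax).card := by rw [hTcard]
end BD

namespace BD

lemma add4_le_pow (j : ℕ) : j + 4 ≤ 2^(j+2) := by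
  induction j with
  | zero => norm_num
  | succ j ih =>
    have h1 : 2^(j+1+2) = 2^(j+2) * 2 := by rw [pow_succ]
    omega

lemma le_two_pow_sub2 {k : ℕ} (hk : 4 ≤ k) : k ≤ 2^(k-2) := by
  have := add4_le_pow (k-4)
  have he : k - 4 + 2 = k - 2 := by omega
  rw [he] at this
  omega

lemma fourb_le {b : ℕ} (hb : 0 < b) : 4 * b ≤ 2^(60*b) := by
  have h1 : b < 2^b := Nat.lt_two_pow_self
  have h2 : 2^(b+2) ≤ 2^(60*b) := Nat.pow_le_pow_right (by norm_num) (by omega)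
  have h3 : 2^(b+2) = 2^b * 4 := by rw [pow_add]; norm_num
  omega

end BD

/-- for every fixed `b` and all sufficiently large `n` divisible by `b`,
there is a `b`-burst-deletion-correcting code with
`|C| ≥ 2ⁿ·b/(2^b·n·(log₂ n)^{b−1})`, i.e., redundancy at most
`log₂ n + (b−1)·log₂ log₂ n + b − log₂ b`. -/
theorem exists_good_burst_deletion_code (b : ℕ) (hb : 0 < b) :
    ∃ n₀ : ℕ, ∀ n : ℕ, n₀ ≤ n → b ∣ n →
      ∃ C : Set (Fin n → Bool),
        (∀ x ∈ C, ∀ y ∈ C, x ≠ y → delBall b x ∩ delBall b y = ∅) ∧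
        (C.ncard : ℝ) ≥
          (2 : ℝ) ^ n * (b : ℝ) /
            ((2 : ℝ) ^ b * (n : ℝ) * (Real.logb 2 (n : ℝ)) ^ (b - 1)) := by
  classical
  refine ⟨2^(60*b), ?_⟩
  intro n hn0 hdvd
  -- basic numeric facts
  have h4b : 4 * b ≤ n := le_trans (BD.fourb_le hb) hn0
  have h4n : 4 ≤ n := by omega
  have h2n : 2 ≤ n := by omega
  set m := n / b with hmdef
  have hn : n = m * b := (Nat.div_mul_cancel hdvd).symm
  have hm4 : 4 ≤ m := (Nat.le_div_iff_mul_le hb).mpr h4b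
  have hm : 1 ≤ m := by omega
  set f := Nat.clog 2 n + 2 with hfdef
  have hf : 0 < f := by omega
  have hfn : f ≤ n := by
    have h1 : Nat.clog 2 n ≤ n - 2 := by
      rw [Nat.clog_le_iff_le_pow (by norm_num : 1 < 2)]
      exact BD.le_two_pow_sub2 h4n
    omega
  set P := f + 3 with hPdef
  -- the code
  obtain ⟨C, hCrll, hCmod, hCcard⟩ := BD.exists_big_fiber (f := f) hb hm hn hPdef
  refine ⟨(C : Set (Fin n → Bool)), ?_, ?_⟩
  · -- burst-deletion correcting
    intro x hx y hy hxy
    rw [Set.eq_empty_iff_forall_notMem]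
    intro z hz
    apply hxy
    rw [Finset.mem_coe] at hx hy
    obtain ⟨hmod1, hmod2⟩ := hCmod x hx y hy
    exact BD.code_correct hb hm hn (le_of_eq hPdef.symm) x y (hCrll x hx) hmod1 hmod2 ⟨z, hz⟩
  · -- cardinality bound
    rw [Set.ncard_coe_finset]
    set L := Real.logb 2 (n : ℝ) with hLdef
    have hL60 : (60 * b : ℝ) ≤ L := by
      have h1 : ((2:ℝ))^(60*b) ≤ (n:ℝ) := by
        calc ((2:ℝ))^(60*b) = ((2^(60*b) : ℕ) : ℝ) := by push_cast; ring
          _ ≤ (n:ℝ) := Nat.cast_le.mpr hn0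
      calc (60 * b : ℝ) = Real.logb 2 ((2:ℝ)^(60*b)) := by
            rw [Real.logb_pow, Real.logb_self_eq_one (by norm_num : (1:ℝ) < 2)]
            push_cast; ring
        _ ≤ L := Real.logb_le_logb_of_le (by norm_num) (by positivity) h1
    have hLpos : 0 < L := by
      have : (60 : ℝ) ≤ 60 * b := by
        have : (1:ℝ) ≤ b := by exact_mod_cast hb
        nlinarith
      linarith
    have hPle : (P:ℝ) ≤ L + 6 := by
      have hc1 : 0 < Nat.clog 2 n := Nat.clog_pos (by norm_num) h2n
      have hlt : 2^(Nat.clog 2 n - 1) < n := Nat.pow_pred_clog_lt_self (by norm_num) (by omega)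
      have h2 : ((Nat.clog 2 n - 1 : ℕ) : ℝ) ≤ L := by
        calc ((Nat.clog 2 n - 1 : ℕ) : ℝ)
            = Real.logb 2 ((2:ℝ)^(Nat.clog 2 n - 1)) := by
              rw [Real.logb_pow, Real.logb_self_eq_one (by norm_num : (1:ℝ) < 2)]; ring
          _ ≤ L := by
              apply Real.logb_le_logb_of_le (by norm_num) (by positivity)
              calc ((2:ℝ))^(Nat.clog 2 n - 1) = ((2^(Nat.clog 2 n - 1) : ℕ) : ℝ) := by
                    push_cast; ring
                _ ≤ (n:ℝ) := Nat.cast_le.mpr (le_of_lt hlt)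
      have h3 : ((Nat.clog 2 n - 1 : ℕ) : ℝ) = (Nat.clog 2 n : ℝ) - 1 := by
        have : (1:ℕ) ≤ Nat.clog 2 n := hc1
        push_cast [this]; ring
      have h4 : (P : ℝ) = (Nat.clog 2 n : ℝ) + 5 := by
        rw [hPdef, hfdef]; push_cast; ring
      rw [h4]; rw [h3] at h2; linarith
    have hexp : Real.exp (1/10) ≤ 6/5 := by
      have h1 : Real.exp (1/10) ^ (10:ℕ) = Real.exp 1 := by
        rw [← Real.exp_nat_mul]; norm_num
      have h2 : Real.exp 1 < (6/5:ℝ)^(10:ℕ) := by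
        have := Real.exp_one_lt_d9
        norm_num at this ⊢
        linarith
      have h3 : Real.exp (1/10) ^ (10:ℕ) < (6/5:ℝ)^(10:ℕ) := by rw [h1]; exact h2
      exact le_of_lt (lt_of_pow_lt_pow_left₀ 10 (by norm_num) h3)
    have hP6 : (P:ℝ)^(b-1) ≤ (6/5) * L^(b-1) := by
      have s1 : (P:ℝ)^(b-1) ≤ (L+6)^(b-1) := pow_le_pow_left₀ (by positivity) hPle _
      have s2 : L + 6 ≤ L * Real.exp (6/L) := by
        have := Real.add_one_le_exp (6/L)
        calc L + 6 = L * (6/L + 1) := by field_simp; ring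
          _ ≤ L * Real.exp (6/L) := mul_le_mul_of_nonneg_left this (le_of_lt hLpos)
      have s3 : (L+6)^(b-1) ≤ (L * Real.exp (6/L))^(b-1) :=
        pow_le_pow_left₀ (by positivity) s2 _
      have s4 : (L * Real.exp (6/L))^(b-1) = L^(b-1) * Real.exp (((b-1:ℕ):ℝ) * (6/L)) := by
        rw [mul_pow, Real.exp_nat_mul]
      have s5 : ((b-1:ℕ):ℝ) * (6/L) ≤ 1/10 := by
        have hble : ((b-1:ℕ):ℝ) ≤ (b:ℝ) := by
          have : (b-1:ℕ) ≤ b := by omega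
          exact_mod_cast this
        have hbpos : (0:ℝ) < b := by exact_mod_cast hb
        have h6L : 6/L ≤ 6/(60*b) := div_le_div_of_nonneg_left (by norm_num) (by positivity) hL60
        have h6Lpos : 0 ≤ 6/L := by positivity
        calc ((b-1:ℕ):ℝ) * (6/L) ≤ (b:ℝ) * (6/L) := mul_le_mul_of_nonneg_right hble h6Lpos
          _ ≤ (b:ℝ) * (6/(60*b)) := mul_le_mul_of_nonneg_left h6L (le_of_lt hbpos)
          _ = 1/10 := by field_simp; ring
      have s6 : Real.exp (((b-1:ℕ):ℝ) * (6/L)) ≤ 6/5 :=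
        le_trans (Real.exp_le_exp.mpr s5) hexp
      calc (P:ℝ)^(b-1) ≤ (L * Real.exp (6/L))^(b-1) := le_trans s1 s3
        _ = L^(b-1) * Real.exp (((b-1:ℕ):ℝ) * (6/L)) := s4
        _ ≤ L^(b-1) * (6/5) := mul_le_mul_of_nonneg_left s6 (by positivity)
        _ = (6/5) * L^(b-1) := by ring
    -- Sgood lower bound (real)
    have hSn := BD.Sgood_card hb hf hfn hn hm
    have hnpos : (0:ℝ) < n := by
      have : (0:ℕ) < n := by omega
      exact_mod_cast this
    have hbadR : ((m * 2^(n-f) : ℕ) : ℝ) ≤ (2:ℝ)^n / 4 := by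
      have hnatineq : (m * 2^(n-f)) * (4*n) ≤ n * 2^n := by
        have h2f : 4 * n ≤ 2^f := by
          have h1 : n ≤ 2^(Nat.clog 2 n) := Nat.le_pow_clog (by norm_num) n
          have h2 : 2^f = 2^(Nat.clog 2 n) * 4 := by rw [hfdef, pow_add]; norm_num
          omega
        have hmn : m ≤ n := Nat.div_le_self n b
        calc (m * 2^(n-f)) * (4*n) ≤ (m * 2^(n-f)) * 2^f :=
              Nat.mul_le_mul_left _ h2f
          _ = m * (2^(n-f) * 2^f) := by ring
          _ = m * 2^n := by rw [← pow_add]; congr 2; omega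
          _ ≤ n * 2^n := Nat.mul_le_mul_right _ hmn
      have hcast : ((m * 2^(n-f) : ℕ) : ℝ) * (4*n) ≤ (n:ℝ) * 2^n := by
        calc ((m * 2^(n-f) : ℕ) : ℝ) * (4*n) = (((m * 2^(n-f)) * (4*n) : ℕ) : ℝ) := by
              push_cast; ring
          _ ≤ (((n * 2^n : ℕ)) : ℝ) := Nat.cast_le.mpr hnatineq
          _ = (n:ℝ) * 2^n := by push_cast; ring
      have h5 : ((m * 2^(n-f) : ℕ) : ℝ) * 4 * n ≤ 2^n * n := by nlinarith [hcast]
      have h6 : ((m * 2^(n-f) : ℕ) : ℝ) * 4 ≤ 2^n :=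
        le_of_mul_le_mul_right (by nlinarith [h5]) hnpos
      linarith
    have hSgR : (3/4:ℝ) * 2^n
        ≤ ((Finset.univ.filter (fun x : Fin n → Bool =>
            BD.RLL f (BD.row b n m hn x 0 hb))).card : ℝ) := by
      have hcast : ((2^n : ℕ) : ℝ)
          ≤ ((Finset.univ.filter (fun x : Fin n → Bool =>
              BD.RLL f (BD.row b n m hn x 0 hb))).card : ℝ) + ((m * 2^(n-f) : ℕ) : ℝ) := by
        have := Nat.cast_le (α := ℝ) |>.mpr hSn
        push_cast at this ⊢
        linarith
      have h2nR : ((2^n : ℕ) : ℝ) = (2:ℝ)^n := by push_cast; ring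
      rw [h2nR] at hcast
      linarith
    -- combine with fiber bound
    have hfibR : ((Finset.univ.filter (fun x : Fin n → Bool =>
        BD.RLL f (BD.row b n m hn x 0 hb))).card : ℝ)
        ≤ (((m+1) * (P*2)^(b-1) : ℕ) : ℝ) * (C.card : ℝ) := by
      have := Nat.cast_le (α := ℝ) |>.mpr hCcard
      push_cast at this ⊢
      linarith
    have hTcb : (((m+1) * (P*2)^(b-1) : ℕ) : ℝ) * b ≤ (3/4) * ((2:ℝ)^b * n * L^(b-1)) := by
      have hb1 : b - 1 + 1 = b := by omega
      have h2b : (2:ℝ)^b = 2^(b-1) * 2 := by rw [← pow_succ, hb1]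
      have hA : ((b:ℝ)) * ((m:ℝ)+1) ≤ (5/4) * n := by
        have h1 : (m:ℝ) * b = n := by exact_mod_cast hn.symm
        have h2 : (b:ℝ) * ((m:ℝ)+1) = n + b := by rw [mul_add, mul_comm (b:ℝ) (m:ℝ), h1]; ring
        have h3 : (b:ℝ) ≤ n/4 := by
          have : ((4*b : ℕ) : ℝ) ≤ (n:ℝ) := Nat.cast_le.mpr h4b
          push_cast at this
          linarith
        rw [h2]; linarith
      have hmul : (((m+1) * (P*2)^(b-1) : ℕ) : ℝ) * b
          = ((b:ℝ) * ((m:ℝ)+1)) * ((2:ℝ)^(b-1) * (P:ℝ)^(b-1)) := by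
        push_cast
        rw [mul_pow]
        ring
      rw [hmul]
      have hstep1 : ((b:ℝ) * ((m:ℝ)+1)) * ((2:ℝ)^(b-1) * (P:ℝ)^(b-1))
          ≤ ((5/4) * n) * ((2:ℝ)^(b-1) * (P:ℝ)^(b-1)) :=
        mul_le_mul_of_nonneg_right hA (by positivity)
      have hstep2 : ((5/4) * (n:ℝ)) * ((2:ℝ)^(b-1) * (P:ℝ)^(b-1))
          ≤ ((5/4) * n) * ((2:ℝ)^(b-1) * ((6/5) * L^(b-1))) := by
        apply mul_le_mul_of_nonneg_left _ (by positivity)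
        exact mul_le_mul_of_nonneg_left hP6 (by positivity)
      calc ((b:ℝ) * ((m:ℝ)+1)) * ((2:ℝ)^(b-1) * (P:ℝ)^(b-1))
          ≤ ((5/4) * n) * ((2:ℝ)^(b-1) * ((6/5) * L^(b-1))) := le_trans hstep1 hstep2
        _ = (3/4) * (((2:ℝ)^(b-1) * 2) * n * L^(b-1)) := by ring
        _ = (3/4) * ((2:ℝ)^b * n * L^(b-1)) := by rw [← h2b]
    -- final arithmetic
    have hden : (0:ℝ) < (2:ℝ)^b * n * L^(b-1) := by
      apply mul_pos (mul_pos (by positivity) hnpos) (pow_pos hLpos _)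
    rw [ge_iff_le, div_le_iff₀ hden]
    have hCnn : (0:ℝ) ≤ (C.card : ℝ) := Nat.cast_nonneg _
    calc (2:ℝ)^n * b = ((3/4) * 2^n) * ((4/3) * b) := by ring
      _ ≤ ((((m+1) * (P*2)^(b-1) : ℕ) : ℝ) * (C.card : ℝ)) * ((4/3) * b) := by
          apply mul_le_mul_of_nonneg_right (le_trans hSgR hfibR) (by positivity)
      _ = (C.card : ℝ) * ((4/3) * ((((m+1) * (P*2)^(b-1) : ℕ) : ℝ) * b)) := by ring
      _ ≤ (C.card : ℝ) * ((4/3) * ((3/4) * ((2:ℝ)^b * n * L^(b-1)))) := by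
          apply mul_le_mul_of_nonneg_left _ hCnn
          exact mul_le_mul_of_nonneg_left hTcb (by norm_num)
      _ = (C.card : ℝ) * ((2:ℝ)^b * n * L^(b-1)) := by ring
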